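/- Let λ ∈ ℂ with |λ| ≠ 1. Then for every matrix A ∈ ℂ^{n×n} there exists S ∈ ℂ^{n×n} such that A + S·J_n(λ) + S* = 0; in other words, the real-linear map S ↦ S·J_n(λ) + S* from ℂ^{n×n} to ℂ^{n×n} is surjective. -/

import Mathlib

open Matrix

/-- The `n×n` upper-triangular Jordan block with eigenvalue `l`. -/
noncomputable def Jmat (n : ℕ) (l : ℂ) : Matrix (Fin n) (Fin n) ℂ :=
  Matrix.of fun i j =>
    if (i : ℕ) = (j : ℕ) then l
    else if (j : ℕ) = (i : ℕ) + 1 then 1 else 0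

/-- The symmetric matrix `Δ_n`: (1-based) entry `(j,k)` is `1` if `j+k = n+1`,
`i` if `j+k = n+2`, and `0` otherwise. -/
noncomputable def Dmat (n : ℕ) : Matrix (Fin n) (Fin n) ℂ :=
  Matrix.of fun i j =>
    if (i : ℕ) + (j : ℕ) + 1 = n then 1
    else if (i : ℕ) + (j : ℕ) = n then Complex.I
    else 0

/-- The `2m×2m` block matrix `H_m(l) = [[0, I],[J_m(l), 0]]`. -/
noncomputable def Hmat (m : ℕ) (l : ℂ) : Matrix (Fin m ⊕ Fin m) (Fin m ⊕ Fin m) ℂ :=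
  Matrix.fromBlocks 0 1 (Jmat m l) 0

/-- `T(A) = {CᴴA + AC}`, the tangent space to the *congruence class of `A`. -/
def Tset {n : Type*} [Fintype n] (A : Matrix n n ℂ) : Set (Matrix n n ℂ) :=
  {X | ∃ C : Matrix n n ℂ, X = Cᴴ * A + A * C}

/-- `T(M,N) = {(SᴴM + NR, RᴴN + MS)}`. -/
def Tpair {p q : Type*} [Fintype p] [Fintype q]
    (M : Matrix p p ℂ) (N : Matrix q q ℂ) :
    Set (Matrix q p ℂ × Matrix p q ℂ) :=
  {X | ∃ (S : Matrix p q ℂ) (R : Matrix q p ℂ),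
      X = (Sᴴ * M + N * R, Rᴴ * N + M * S)}



lemma col_sum (n : ℕ) (l : ℂ) (i : Fin n) (v : Fin n → ℂ) :
    ∑ a, star ((Jmat n l) a i) * v a
      = (starRingEnd ℂ) l * v i + (if h : 0 < (i : ℕ) then v ⟨(i : ℕ) - 1, by omega⟩ else 0) := by
  have key : ∀ a : Fin n, star ((Jmat n l) a i) * v a
      = (if a = i then (starRingEnd ℂ) l * v i else 0)
        + (if (i : ℕ) = (a : ℕ) + 1 then v a else 0) := by
    intro a
    simp only [Jmat, Matrix.of_apply]
    by_cases h : (a : ℕ) = (i : ℕ)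
    · have ha : a = i := Fin.ext h
      subst ha
      simp [mul_comm]
    · have ha : ¬ a = i := fun hc => h (by rw [hc])
      rw [if_neg h, if_neg ha]
      by_cases h2 : (i : ℕ) = (a : ℕ) + 1
      · simp [h2]
      · simp [h2]
  rw [Finset.sum_congr rfl fun a _ => key a, Finset.sum_add_distrib,
    Finset.sum_ite_eq' Finset.univ i]
  simp only [Finset.mem_univ, if_true]
  congr 1
  split_ifs with h
  · rw [Finset.sum_eq_single (⟨(i : ℕ) - 1, by omega⟩ : Fin n)]
    · simp only [Fin.val_mk]
      rw [if_pos (by omega)]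
    · intro b _ hb
      rw [if_neg]
      intro hc
      exact hb (Fin.ext (by simp only [Fin.val_mk]; omega))
    · simp
  · apply Finset.sum_eq_zero
    intro b _
    rw [if_neg]; omega

lemma row_sum (n : ℕ) (l : ℂ) (j : Fin n) (u : Fin n → ℂ) :
    ∑ b, u b * (Jmat n l) b j
      = l * u j + (if h : 0 < (j : ℕ) then u ⟨(j : ℕ) - 1, by omega⟩ else 0) := by
  have key : ∀ b : Fin n, u b * (Jmat n l) b j
      = (if b = j then l * u j else 0)
        + (if (j : ℕ) = (b : ℕ) + 1 then u b else 0) := by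
    intro b
    simp only [Jmat, Matrix.of_apply]
    by_cases h : (b : ℕ) = (j : ℕ)
    · have hb : b = j := Fin.ext h
      subst hb
      simp [mul_comm]
    · have hb : ¬ b = j := fun hc => h (by rw [hc])
      rw [if_neg h, if_neg hb]
      by_cases h2 : (j : ℕ) = (b : ℕ) + 1
      · simp [h2]
      · simp [h2]
  rw [Finset.sum_congr rfl fun b _ => key b, Finset.sum_add_distrib,
    Finset.sum_ite_eq' Finset.univ j]
  simp only [Finset.mem_univ, if_true]
  congr 1
  split_ifs with h
  · rw [Finset.sum_eq_single (⟨(j : ℕ) - 1, by omega⟩ : Fin n)]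
    · simp only [Fin.val_mk]
      rw [if_pos (by omega)]
    · intro b _ hb
      rw [if_neg]
      intro hc
      exact hb (Fin.ext (by simp only [Fin.val_mk]; omega))
    · simp
  · apply Finset.sum_eq_zero
    intro b _
    rw [if_neg]; omega

lemma one_sub_ne (l : ℂ) (hl : ‖l‖ ≠ 1) :
    (1 : ℂ) - l * (starRingEnd ℂ) l ≠ 0 := by
  intro hc
  have h1 : l * (starRingEnd ℂ) l = 1 := by linear_combination -hc
  have h2 : (Complex.normSq l : ℂ) = 1 := by
    rw [← Complex.mul_conj]; exact h1
  have h3 : Complex.normSq l = 1 := by exact_mod_cast h2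
  have h4 : ‖l‖ ^ 2 = 1 := by rw [Complex.sq_norm]; exact h3
  have h5 : ‖l‖ = 1 := by nlinarith [norm_nonneg l]
  exact hl h5

lemma inj_lemma (n : ℕ) (l : ℂ) (hl : ‖l‖ ≠ 1)
    (S : Matrix (Fin n) (Fin n) ℂ) (h : S * Jmat n l + Sᴴ = 0) : S = 0 := by
  have h2 : Sᴴ = -(S * Jmat n l) := eq_neg_of_add_eq_zero_left (by rw [add_comm]; exact h)
  have h1 : S = (Jmat n l)ᴴ * S * (Jmat n l) := by
    calc S = (Sᴴ)ᴴ := (conjTranspose_conjTranspose S).symm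
    _ = (-(S * Jmat n l))ᴴ := by rw [h2]
    _ = -((Jmat n l)ᴴ * Sᴴ) := by rw [conjTranspose_neg, conjTranspose_mul]
    _ = -((Jmat n l)ᴴ * (-(S * Jmat n l))) := by rw [h2]
    _ = (Jmat n l)ᴴ * S * (Jmat n l) := by
        rw [mul_neg, neg_neg, Matrix.mul_assoc]
  have hzero : ∀ k : ℕ, ∀ i j : Fin n, (i : ℕ) + (j : ℕ) = k → S i j = 0 := by
    intro k
    induction k using Nat.strong_induction_on with
    | _ k ih =>
      intro i j hk
      have e : S i j = ∑ b, (∑ a, star ((Jmat n l) a i) * S a b) * (Jmat n l) b j := by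
        conv_lhs => rw [h1]
        simp only [Matrix.mul_apply, Matrix.conjTranspose_apply]
      rw [row_sum n l j] at e
      simp only [col_sum n l i] at e
      have hne := one_sub_ne l hl
      by_cases hi : 0 < (i : ℕ) <;> by_cases hj : 0 < (j : ℕ) <;>
        simp only [dif_pos, dif_neg, hi, hj, dite_true, dite_false, not_false_iff] at e
      · have z1 : S ⟨(i : ℕ) - 1, by omega⟩ j = 0 :=
          ih ((i : ℕ) - 1 + (j : ℕ)) (by omega) _ _ (by simp)
        have z2 : S i ⟨(j : ℕ) - 1, by omega⟩ = 0 :=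
          ih ((i : ℕ) + ((j : ℕ) - 1)) (by omega) _ _ (by simp)
        have z3 : S ⟨(i : ℕ) - 1, by omega⟩ ⟨(j : ℕ) - 1, by omega⟩ = 0 :=
          ih ((i : ℕ) - 1 + ((j : ℕ) - 1)) (by omega) _ _ (by simp)
        rw [z1, z2, z3] at e
        have h9 : ((1 : ℂ) - l * (starRingEnd ℂ) l) * S i j = 0 := by linear_combination e
        exact (mul_eq_zero.mp h9).resolve_left hne
      · have z1 : S ⟨(i : ℕ) - 1, by omega⟩ j = 0 :=
          ih ((i : ℕ) - 1 + (j : ℕ)) (by omega) _ _ (by simp)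
        rw [z1] at e
        have h9 : ((1 : ℂ) - l * (starRingEnd ℂ) l) * S i j = 0 := by linear_combination e
        exact (mul_eq_zero.mp h9).resolve_left hne
      · have z2 : S i ⟨(j : ℕ) - 1, by omega⟩ = 0 :=
          ih ((i : ℕ) + ((j : ℕ) - 1)) (by omega) _ _ (by simp)
        rw [z2] at e
        have h9 : ((1 : ℂ) - l * (starRingEnd ℂ) l) * S i j = 0 := by linear_combination e
        exact (mul_eq_zero.mp h9).resolve_left hne
      · have h9 : ((1 : ℂ) - l * (starRingEnd ℂ) l) * S i j = 0 := by linear_combination e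
        exact (mul_eq_zero.mp h9).resolve_left hne
  ext i j
  exact hzero ((i : ℕ) + (j : ℕ)) i j rfl

noncomputable def phiMap (n : ℕ) (l : ℂ) :
    Matrix (Fin n) (Fin n) ℂ →ₗ[ℝ] Matrix (Fin n) (Fin n) ℂ where
  toFun S := S * Jmat n l + Sᴴ
  map_add' S T := by
    show (S + T) * Jmat n l + (S + T)ᴴ = (S * Jmat n l + Sᴴ) + (T * Jmat n l + Tᴴ)
    rw [add_mul, conjTranspose_add]
    abel
  map_smul' r S := by
    simp only [RingHom.id_apply]
    show (r • S) * Jmat n l + (r • S)ᴴ = r • (S * Jmat n l + Sᴴ)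
    rw [Matrix.smul_mul, conjTranspose_smul, star_trivial, smul_add]


/-- For `|λ| ≠ 1`, the map `S ↦ S·J_n(λ) + Sᴴ` is surjective: every `A` can be
reduced to `0` by adding `S·J_n(λ) + Sᴴ`. -/
theorem stmt3 (n : ℕ) (l : ℂ) (hl : ‖l‖ ≠ 1)
    (A : Matrix (Fin n) (Fin n) ℂ) :
    ∃ S : Matrix (Fin n) (Fin n) ℂ, A + S * Jmat n l + Sᴴ = 0 := by
  have hinj : Function.Injective (phiMap n l) := by
    rw [← LinearMap.ker_eq_bot, LinearMap.ker_eq_bot']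
    intro S hS
    exact inj_lemma n l hl S hS
  have hsurj : Function.Surjective (phiMap n l) :=
    (LinearMap.injective_iff_surjective).mp hinj
  obtain ⟨S, hS⟩ := hsurj (-A)
  refine ⟨S, ?_⟩
  have : S * Jmat n l + Sᴴ = -A := hS
  rw [add_assoc, this, add_neg_cancel]
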